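/- Let N ≥ 1 and let G : 𝒳 → 𝒳 be the chaotic-iterations map G(s,x) = (σ(s), F(s_0, x)). The set of periodic points of G is dense in the metric space (𝒳, d): for every (ŝ,x̂) ∈ 𝒳 and every ε > 0, there exist a point (s̃,x̃) ∈ 𝒳 and an integer p ≥ 1 such that G^p(s̃,x̃) = (s̃,x̃) and d((ŝ,x̂),(s̃,x̃)) < ε. -/

import Mathlib

/-- Distance between two strategy sequences:
`dS s t = ∑_{k=0}^∞ |s_k - t_k| / N^(k+1)`. -/
noncomputable def dS (N : ℕ) (s t : ℕ → Fin N) : ℝ :=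
  ∑' k : ℕ, |((s k : ℕ) : ℝ) - ((t k : ℕ) : ℝ)| / (N : ℝ) ^ (k + 1)

/-- Hamming distance between two Boolean vectors. -/
noncomputable def dX (N : ℕ) (x y : Fin N → Bool) : ℝ :=
  ((Finset.univ.filter (fun j => x j ≠ y j)).card : ℝ)

/-- Distance on the phase space `𝒳 = (ℕ → Fin N) × (Fin N → Bool)`. -/
noncomputable def dE (N : ℕ) (p q : (ℕ → Fin N) × (Fin N → Bool)) : ℝ :=
  dS N p.1 q.1 + dX N p.2 q.2

/-- Negate exactly the `k`-th coordinate of the Boolean vector `x`. -/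
def Fflip (N : ℕ) (k : Fin N) (x : Fin N → Bool) : Fin N → Bool :=
  fun j => if j = k then !(x j) else x j

/-- The chaotic-iterations map `G (s, x) = (σ s, F (s 0, x))`. -/
def G (N : ℕ) (p : (ℕ → Fin N) × (Fin N → Bool)) : (ℕ → Fin N) × (Fin N → Bool) :=
  (fun n => p.1 (n + 1), Fflip N (p.1 0) p.2)

/-- Cumulative flip pattern produced by the strategy `s` after `k` steps. -/
def flips (N : ℕ) (s : ℕ → Fin N) : ℕ → Fin N → Bool
  | 0 => fun _ => false
  | k+1 => fun j => xor (flips N s k j) (decide (j = s k))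

lemma G_iterate (N : ℕ) : ∀ (k : ℕ) (s : ℕ → Fin N) (x : Fin N → Bool),
    (G N)^[k] (s, x) = (fun m => s (m + k), fun j => xor (x j) (flips N s k j)) := by
  intro k
  induction k with
  | zero => intro s x; simp [flips]
  | succ k ih =>
    intro s x
    rw [Function.iterate_succ_apply', ih]
    unfold G Fflip
    refine Prod.ext ?_ ?_
    · funext m; simp only; congr 1; omega
    · funext j
      simp only [flips]
      by_cases h : j = s k
      · simp [h]
      · simp [h]

lemma dS_bound (N n : ℕ) (hN : 2 ≤ N) (s t : ℕ → Fin N)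
    (hagree : ∀ k < n, s k = t k) : dS N s t ≤ ((N : ℝ)⁻¹) ^ n := by
  have hN1 : (1 : ℝ) < (N : ℝ) := by
    have : (2 : ℝ) ≤ (N : ℝ) := by exact_mod_cast hN
    linarith
  have hNpos : (0 : ℝ) < (N : ℝ) := by linarith
  set r : ℝ := (N : ℝ)⁻¹ with hr_def
  have hr0 : 0 ≤ r := by positivity
  have hr1 : r < 1 := by rw [hr_def, inv_lt_one_iff₀]; right; exact hN1
  set f : ℕ → ℝ := fun k => |((s k : ℕ) : ℝ) - ((t k : ℕ) : ℝ)| / (N : ℝ) ^ (k + 1) with hf_def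
  set g : ℕ → ℝ := fun k => (((N : ℝ) - 1) * r) * r ^ k with hg_def
  have hf0 : ∀ k, 0 ≤ f k := fun k => by positivity
  have hval : ∀ (u : ℕ → Fin N) (k : ℕ), ((u k : ℕ) : ℝ) ≤ (N : ℝ) - 1 := by
    intro u k
    have h2 : (u k : ℕ) ≤ N - 1 := Nat.le_pred_of_lt (u k).isLt
    have h3 := Nat.cast_le (α := ℝ) |>.mpr h2
    rw [Nat.cast_sub (by omega)] at h3; simpa using h3
  have hgr : ∀ k, g k = ((N : ℝ) - 1) / (N : ℝ) ^ (k + 1) := by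
    intro k
    rw [hg_def]
    simp only
    rw [mul_assoc, ← pow_succ', hr_def, inv_pow, ← div_eq_mul_inv]
  have hfg : ∀ k, f k ≤ g k := by
    intro k
    rw [hgr k, hf_def]
    simp only
    have hnum : |((s k : ℕ) : ℝ) - ((t k : ℕ) : ℝ)| ≤ (N : ℝ) - 1 := by
      rw [abs_sub_le_iff]
      have h1 := hval s k; have h2 := hval t k
      have h3 : (0:ℝ) ≤ ((s k : ℕ) : ℝ) := Nat.cast_nonneg _
      have h4 : (0:ℝ) ≤ ((t k : ℕ) : ℝ) := Nat.cast_nonneg _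
      constructor <;> linarith
    gcongr
  have hg_summ : Summable g := (summable_geometric_of_lt_one hr0 hr1).mul_left _
  have hf_summ : Summable f := Summable.of_nonneg_of_le hf0 hfg hg_summ
  have hsplit := Summable.sum_add_tsum_nat_add (f := f) n hf_summ
  have hzero : ∑ i ∈ Finset.range n, f i = 0 := by
    apply Finset.sum_eq_zero
    intro i hi
    rw [hf_def]
    simp only
    rw [hagree i (Finset.mem_range.mp hi), sub_self, abs_zero, zero_div]
  have hdS : dS N s t = ∑' i, f (i + n) := by
    rw [dS, ← hsplit, hzero, zero_add]
  rw [hdS]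
  have hle : ∑' i, f (i + n) ≤ ∑' i, g (i + n) :=
    Summable.tsum_le_tsum (fun i => hfg (i + n)) ((summable_nat_add_iff n).mpr hf_summ)
      ((summable_nat_add_iff n).mpr hg_summ)
  have hgsum : ∑' i, g (i + n) = (((N : ℝ) - 1) * r) * r ^ n * (1 - r)⁻¹ := by
    have : ∀ i, g (i + n) = ((((N : ℝ) - 1) * r) * r ^ n) * r ^ i := by
      intro i; rw [hg_def]; simp only; rw [pow_add]; ring
    rw [tsum_congr this, tsum_mul_left, tsum_geometric_of_lt_one hr0 hr1]
  have hone : (((N : ℝ) - 1) * r) * (1 - r)⁻¹ = 1 := by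
    rw [hr_def]
    have hne : (N : ℝ) ≠ 0 := ne_of_gt hNpos
    have hne1 : (N : ℝ) - 1 ≠ 0 := by intro h; nlinarith
    field_simp
  calc ∑' i, f (i + n) ≤ ∑' i, g (i + n) := hle
    _ = (((N : ℝ) - 1) * r) * (1 - r)⁻¹ * r ^ n := by rw [hgsum]; ring
    _ = r ^ n := by rw [hone, one_mul]

/-- The periodic points of `G` are dense in `(𝒳, dE)`: within any `ε` of any
point there is a point periodic under `G` with some period `p ≥ 1`. -/
theorem stmt4 (N : ℕ) (hN : 1 ≤ N) :
    ∀ q : (ℕ → Fin N) × (Fin N → Bool), ∀ ε : ℝ, 0 < ε →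
      ∃ p : (ℕ → Fin N) × (Fin N → Bool), ∃ k : ℕ, 1 ≤ k ∧
        (G N)^[k] p = p ∧ dE N q p < ε := by
  intro q ε hε
  obtain ⟨n, hn1, hbound⟩ : ∃ n : ℕ, 1 ≤ n ∧ dS N q.1 (fun k => q.1 (k % n)) < ε := by
    rcases eq_or_lt_of_le hN with hN1 | hN2
    · -- N = 1
      refine ⟨1, le_refl _, ?_⟩
      have hz : ∀ m : ℕ, ((q.1 m : ℕ) : ℝ) = 0 := by
        intro m
        have := (q.1 m).isLt
        have : (q.1 m : ℕ) = 0 := by omega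
        simp [this]
      have : dS N q.1 (fun k => q.1 (k % 1)) = 0 := by
        rw [dS]
        convert tsum_zero with k
        rw [hz, hz, sub_zero, abs_zero, zero_div]
      linarith
    · -- 2 ≤ N
      have hN2' : 2 ≤ N := hN2
      have hN1' : (1 : ℝ) < (N : ℝ) := by
        have : (2 : ℝ) ≤ (N : ℝ) := by exact_mod_cast hN2'
        linarith
      have hr0 : (0:ℝ) ≤ (N : ℝ)⁻¹ := by positivity
      have hr1 : (N : ℝ)⁻¹ < 1 := by rw [inv_lt_one_iff₀]; right; exact hN1'
      obtain ⟨n0, hn0⟩ := exists_pow_lt_of_lt_one hε hr1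
      refine ⟨n0 + 1, by omega, ?_⟩
      have hb := dS_bound N (n0 + 1) hN2' q.1 (fun k => q.1 (k % (n0 + 1)))
        (fun k hk => by rw [Nat.mod_eq_of_lt hk])
      have hmono : ((N : ℝ)⁻¹) ^ (n0 + 1) ≤ ((N : ℝ)⁻¹) ^ n0 :=
        pow_le_pow_of_le_one hr0 hr1.le (by omega)
      linarith
  set s' : ℕ → Fin N := fun k => q.1 (k % n) with hs'
  have hper : (fun m => s' (m + n)) = s' := by
    funext m
    simp only [hs', Nat.add_mod_right]
  have h1 : (G N)^[n] (s', q.2) = (s', fun j => xor (q.2 j) (flips N s' n j)) := by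
    rw [G_iterate, hper]
  have h2 : (G N)^[n] (s', fun j => xor (q.2 j) (flips N s' n j)) = (s', q.2) := by
    rw [G_iterate, hper]
    congr 1
    funext j
    simp [Bool.xor_assoc]
  refine ⟨(s', q.2), n + n, by omega, ?_, ?_⟩
  · rw [Function.iterate_add_apply, h1, h2]
  · show dS N q.1 s' + dX N q.2 q.2 < ε
    have hx : dX N q.2 q.2 = 0 := by simp [dX]
    rw [hx, add_zero]
    exact hbound
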